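/- With notation as in the construction: S a semigroup, {X_g}_{g∈S} an injective family contained in a set with the overlap property, H = F(b₁,b₂)/ξ where ξ is the congruence generated by {(X_h, X_{h'}X_{h''}) : h = h'h'' in S}, and H_S the subsemigroup of F(b₁,b₂) generated by {X_g}. If a word W over {b₁,b₂} is ξ-congruent to a word U lying in H_S, then W itself lies in H_S (i.e., W is a product of words X_g). -/

import Mathlib

/-- A set of words satisfies the overlap property if (1) no element is a proper subword of
another and (2) whenever `Y ≡ UV` and `Z ≡ WU` with `U` nonempty, `Y ≡ U ≡ Z`. -/
def OverlapProp {α : Type*} (M : Set (List α)) : Prop :=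
  (∀ Y ∈ M, ∀ Z ∈ M, Y <:+: Z → Y = Z) ∧
  (∀ Y ∈ M, ∀ Z ∈ M, ∀ U V W : List α, U ≠ [] → Y = U ++ V → Z = W ++ U →
    U = Y ∧ U = Z)

/-- The word (nonempty list of letters) corresponding to an element of a free semigroup. -/
def FSword {α : Type*} (x : FreeSemigroup α) : List α := x.head :: x.tail

/-- The defining relations `X_h = X_{h'} X_{h''}` for `h = h'h''` in `S`, as a relation on
the free semigroup `F(b₁,b₂)`. -/
def defRel {S : Type*} [Semigroup S] (X : S → FreeSemigroup (Fin 2)) :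
    FreeSemigroup (Fin 2) → FreeSemigroup (Fin 2) → Prop := fun x y =>
  ∃ h h' h'' : S, h = h' * h'' ∧ x = X h ∧ y = X h' * X h''

section Aux

variable {α : Type*} {S : Type*}

lemma FSword_mul (x y : FreeSemigroup α) : FSword (x * y) = FSword x ++ FSword y := rfl

lemma FSword_ne_nil (x : FreeSemigroup α) : FSword x ≠ [] := by simp [FSword]

lemma FSword_injective : Function.Injective (FSword (α := α)) := by
  rintro ⟨a, s⟩ ⟨b, t⟩ h
  simpa [FSword, FreeSemigroup.ext_iff] using h

/-- Alignment: any occurrence of a word of `M` inside a concatenation of words of `M`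
must coincide with one of the factors. -/
lemma align (M : Set (List α)) (hM : OverlapProp M) (hne : [] ∉ M)
    (w : S → List α) (hw : ∀ g, w g ∈ M) (h : S) :
    ∀ (gs : List S) (A B : List α), (gs.map w).flatten = A ++ w h ++ B →
      ∃ gs1 gs2, (∃ k, gs = gs1 ++ k :: gs2) ∧ A = (gs1.map w).flatten ∧
        B = (gs2.map w).flatten := by
  have hwne : ∀ g, w g ≠ [] := fun g he => hne (he ▸ hw g)
  intro gs
  induction gs with
  | nil =>
      intro A B hj
      exfalso
      simp only [List.map_nil, List.flatten_nil] at hj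
      exact hwne h (List.append_eq_nil_iff.1 ((List.append_eq_nil_iff.1 hj.symm).1)).2
  | cons g rest ih =>
      intro A B hj
      simp only [List.map_cons, List.flatten_cons] at hj
      rcases le_or_gt (w g).length A.length with hl | hl
      · -- `w g` is a prefix of `A`
        have h1 : w g <+: A ++ (w h ++ B) := ⟨(rest.map w).flatten, by
          simpa [List.append_assoc] using hj⟩
        have h2 : A <+: A ++ (w h ++ B) := List.prefix_append _ _
        obtain ⟨A', rfl⟩ := List.prefix_of_prefix_length_le h1 h2 hl
        have hj' : (rest.map w).flatten = A' ++ w h ++ B := by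
          apply List.append_cancel_left (as := w g)
          simpa [List.append_assoc] using hj
        obtain ⟨gs1, gs2, ⟨k, rfl⟩, hA, hB⟩ := ih A' B hj'
        exact ⟨g :: gs1, gs2, ⟨k, rfl⟩, by simp [hA], hB⟩
      · -- `A` is a proper prefix of `w g`
        have h1 : A <+: w g ++ (rest.map w).flatten := ⟨w h ++ B, by
          simpa [List.append_assoc] using hj.symm⟩
        have h2 : w g <+: w g ++ (rest.map w).flatten := List.prefix_append _ _
        obtain ⟨Usfx, hU⟩ := List.prefix_of_prefix_length_le h1 h2 hl.le
        have hUne : Usfx ≠ [] := by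
          rintro rfl
          rw [List.append_nil] at hU
          rw [hU] at hl
          exact lt_irrefl _ hl
        have hj2 : Usfx ++ (rest.map w).flatten = w h ++ B := by
          apply List.append_cancel_left (as := A)
          rw [← List.append_assoc, hU]
          simpa [List.append_assoc] using hj
        have key : w h = w g ∧ A = [] := by
          rcases le_or_gt (w h).length Usfx.length with hl2 | hl2
          · -- `w h` is an infix of `w g`
            have p1 : w h <+: Usfx ++ (rest.map w).flatten := ⟨B, by
              simpa [List.append_assoc] using hj2.symm⟩
            have p2 : Usfx <+: Usfx ++ (rest.map w).flatten := List.prefix_append _ _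
            have hpre : w h <+: Usfx := List.prefix_of_prefix_length_le p1 p2 hl2
            have hsuf : Usfx <:+ w g := ⟨A, hU⟩
            have hinf : w h <:+: w g := hpre.isInfix.trans hsuf.isInfix
            have heq : w h = w g := hM.1 (w h) (hw h) (w g) (hw g) hinf
            have hlen : A.length = 0 := by
              have := congrArg List.length hU
              rw [List.length_append] at this
              rw [heq] at hl2
              omega
            exact ⟨heq, List.length_eq_zero_iff.1 hlen⟩
          · -- overlap: `Usfx` is a nonempty prefix of `w h` and suffix of `w g`
            have p1 : Usfx <+: w h ++ B := ⟨(rest.map w).flatten, hj2⟩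
            have p2 : w h <+: w h ++ B := List.prefix_append _ _
            obtain ⟨V, hV⟩ := List.prefix_of_prefix_length_le p1 p2 hl2.le
            obtain ⟨hU1, hU2⟩ :=
              hM.2 (w h) (hw h) (w g) (hw g) Usfx V A hUne hV.symm hU.symm
            have hlen : A.length = 0 := by
              have := congrArg List.length hU
              rw [List.length_append, ← hU2] at this
              omega
            exact ⟨hU1.symm.trans hU2, List.length_eq_zero_iff.1 hlen⟩
        obtain ⟨hwg, rfl⟩ := key
        have hB : (rest.map w).flatten = B := by
          apply List.append_cancel_left (as := w g)
          rw [← hwg] at hj ⊢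
          simpa using hj
        exact ⟨[], rest, ⟨g, by simp⟩, by simpa using hU.symm ▸ rfl, hB.symm⟩

end Aux

section Main

variable {S : Type*} [Semigroup S] (X : S → FreeSemigroup (Fin 2))

/-- Membership in the concatenation set. -/
def InL (X : S → FreeSemigroup (Fin 2)) (l : List (Fin 2)) : Prop :=
  ∃ gs : List S, gs ≠ [] ∧ l = (gs.map fun g => FSword (X g)).flatten

lemma memH_iff (u : FreeSemigroup (Fin 2)) :
    u ∈ Subsemigroup.closure (Set.range X) ↔ InL X (FSword u) := by
  constructor
  · intro hu
    induction hu using Subsemigroup.closure_induction with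
    | mem x hx =>
        obtain ⟨g, rfl⟩ := hx
        exact ⟨[g], by simp, by simp⟩
    | mul x y _ _ hx hy =>
        obtain ⟨gs1, h1, e1⟩ := hx
        obtain ⟨gs2, h2, e2⟩ := hy
        exact ⟨gs1 ++ gs2, by simp [h1], by simp [FSword_mul, e1, e2]⟩
  · rintro ⟨gs, hgs, hu⟩
    have main : ∀ gs : List S, gs ≠ [] →
        ∃ v ∈ Subsemigroup.closure (Set.range X),
          FSword v = (gs.map fun g => FSword (X g)).flatten := by
      intro gs
      induction gs with
      | nil => intro h; exact absurd rfl h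
      | cons g rest ih =>
          intro _
          rcases eq_or_ne rest [] with rfl | hr
          · exact ⟨X g, Subsemigroup.subset_closure ⟨g, rfl⟩, by simp⟩
          · obtain ⟨v, hv, hfs⟩ := ih hr
            exact ⟨X g * v, Subsemigroup.mul_mem _
              (Subsemigroup.subset_closure ⟨g, rfl⟩) hv,
              by simp [FSword_mul, hfs]⟩
    obtain ⟨v, hv, hfs⟩ := main gs hgs
    have : v = u := FSword_injective (by rw [hfs, hu])
    exact this ▸ hv

end Main

/-- with `ξ` the congruence generated by the defining relations and `H_S` the
subsemigroup of `F(b₁,b₂)` generated by `{X_g}`, any word `W` that is `ξ`-congruent to a word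
`U ∈ H_S` itself lies in `H_S`. -/
theorem stmt12 {S : Type*} [Semigroup S] (M : Set (List (Fin 2))) (hM : OverlapProp M)
    (hne : [] ∉ M) (X : S → FreeSemigroup (Fin 2)) (hinj : Function.Injective X)
    (hmem : ∀ g : S, FSword (X g) ∈ M)
    (W U : FreeSemigroup (Fin 2))
    (hU : U ∈ Subsemigroup.closure (Set.range X))
    (hWU : conGen (defRel X) W U) :
    W ∈ Subsemigroup.closure (Set.range X) := by
  set w : S → List (Fin 2) := fun g => FSword (X g) with hwdef
  -- the congruence of "same membership in all contexts"
  set C : Con (FreeSemigroup (Fin 2)) :=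
    { r := fun x y => ∀ A B : List (Fin 2),
        InL X (A ++ FSword x ++ B) ↔ InL X (A ++ FSword y ++ B)
      iseqv := ⟨fun x A B => Iff.rfl, fun h A B => (h A B).symm,
        fun h1 h2 A B => (h1 A B).trans (h2 A B)⟩
      mul' := by
        intro a b c d hab hcd A B
        rw [FSword_mul, FSword_mul]
        calc InL X (A ++ (FSword a ++ FSword c) ++ B)
            ↔ InL X (A ++ FSword b ++ (FSword c ++ B)) := by
              rw [show A ++ (FSword a ++ FSword c) ++ B
                  = A ++ FSword a ++ (FSword c ++ B) by simp [List.append_assoc]]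
              exact hab A (FSword c ++ B)
          _ ↔ InL X ((A ++ FSword b) ++ FSword d ++ B) := by
              rw [show A ++ FSword b ++ (FSword c ++ B)
                  = (A ++ FSword b) ++ FSword c ++ B by simp [List.append_assoc]]
              exact hcd (A ++ FSword b) B
          _ ↔ InL X (A ++ (FSword b ++ FSword d) ++ B) := by
              rw [show (A ++ FSword b) ++ FSword d ++ B
                  = A ++ (FSword b ++ FSword d) ++ B by simp [List.append_assoc]] }
  have hC : conGen (defRel X) ≤ C := by
    apply Con.conGen_le.2
    rintro x y ⟨h, h', h'', hh, rfl, rfl⟩ A B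
    constructor
    · rintro ⟨gs, hgs, hj⟩
      obtain ⟨gs1, gs2, ⟨k, rfl⟩, hA, hB⟩ :=
        align M hM hne w hmem h gs A B hj.symm
      refine ⟨gs1 ++ h' :: h'' :: gs2, by simp, ?_⟩
      rw [FSword_mul]
      simp only [List.map_append, List.map_cons, List.flatten_append, List.flatten_cons]
      rw [hA, hB]
      simp [hwdef, List.append_assoc]
    · rintro ⟨gs, hgs, hj⟩
      rw [FSword_mul] at hj
      have hj1 : (gs.map w).flatten = A ++ w h' ++ (w h'' ++ B) := by
        rw [← hj]; simp [hwdef, List.append_assoc]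
      obtain ⟨gs1, gs2, ⟨k, rfl⟩, hA, hB⟩ :=
        align M hM hne w hmem h' gs A (w h'' ++ B) hj1
      have hj2 : (gs2.map w).flatten = [] ++ w h'' ++ B := by simpa using hB.symm
      obtain ⟨gs3, gs4, ⟨k', rfl⟩, hA2, hB2⟩ :=
        align M hM hne w hmem h'' gs2 [] B hj2
      have hgs3 : gs3 = [] := by
        cases gs3 with
        | nil => rfl
        | cons a t =>
            exfalso
            have : w a ≠ [] := fun he => hne (he ▸ hmem a)
            simp only [List.map_cons, List.flatten_cons] at hA2
            exact this (List.append_eq_nil_iff.1 hA2.symm).1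
      subst hgs3
      refine ⟨gs1 ++ h :: gs4, by simp, ?_⟩
      simp only [List.map_append, List.map_cons, List.flatten_append, List.flatten_cons]
      rw [hA, hB2]
      simp [hwdef, List.append_assoc]
  have hr : ∀ A B, InL X (A ++ FSword W ++ B) ↔ InL X (A ++ FSword U ++ B) := hC hWU
  have := hr [] []
  simp only [List.nil_append, List.append_nil] at this
  rw [memH_iff] at hU ⊢
  exact this.2 hU
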